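/- For every integer m ≥ 1, the digital net generated by (I_m, P_m, J_m) is a (0,m,3)-net over F₂. -/

import Mathlib

open Matrix

/-- The vector of binary digits of `l` (least significant first). -/
def digitsVec (m l : ℕ) : Fin m → ZMod 2 := fun k => if l.testBit k.val then 1 else 0

/-- The map φ sending a bit vector to a real number in [0,1). -/
noncomputable def phiMap (m : ℕ) (y : Fin m → ZMod 2) : ℝ :=
  ∑ k : Fin m, ((y k).val : ℝ) / 2 ^ (k.val + 1)

/-- The digital net (as a multiset of `2^m` points in `[0,1)^s`) generated by
matrices `C 0, …, C (s-1)`. -/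
noncomputable def digitalNet (m s : ℕ) (C : Fin s → Matrix (Fin m) (Fin m) (ZMod 2)) :
    Multiset (Fin s → ℝ) :=
  (Multiset.range (2 ^ m)).map fun l => fun j => phiMap m ((C j).mulVec (digitsVec m l))

open Classical in
/-- `P` is a `(t,m,s)`-net over `F₂`: every elementary interval of volume `2^{t-m}`
contains exactly `2^t` points of `P`, counted with multiplicity. -/
def IsNet (t m s : ℕ) (P : Multiset (Fin s → ℝ)) : Prop :=
  ∀ d : Fin s → ℕ, (∑ i, d i) = m - t →
    ∀ a : Fin s → ℕ, (∀ i, a i < 2 ^ d i) →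
      (P.countP fun x => ∀ i,
        ((a i : ℝ) / 2 ^ d i ≤ x i ∧ x i < ((a i : ℝ) + 1) / 2 ^ d i)) = 2 ^ t

/-- The anti-diagonal matrix `J_m` over `F₂`. -/
def Jmat (m : ℕ) : Matrix (Fin m) (Fin m) (ZMod 2) :=
  Matrix.of fun i j => if i.val + j.val = m - 1 then 1 else 0

/-- The upper-triangular Pascal matrix `P_m` over `F₂` (0-indexed entry `(i,j)` is
`binom(j,i) mod 2`). -/
def Pmat (m : ℕ) : Matrix (Fin m) (Fin m) (ZMod 2) :=
  Matrix.of fun i j => ((j.val.choose i.val : ℕ) : ZMod 2)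

/-- A matrix is lower triangular. -/
def IsLowerTri {m : ℕ} (L : Matrix (Fin m) (Fin m) (ZMod 2)) : Prop :=
  ∀ i j : Fin m, i < j → L i j = 0

section Aux
open Finset

lemma bits_inj : ∀ (d : ℕ) (f g : ℕ → ℕ), (∀ j, f j ≤ 1) → (∀ j, g j ≤ 1) →
    (∑ j ∈ Finset.range d, f j * 2 ^ j = ∑ j ∈ Finset.range d, g j * 2 ^ j) →
    ∀ j < d, f j = g j := by
  intro d
  induction d with
  | zero => intro f g _ _ _ j hj; omega
  | succ d ih =>
    intro f g hf hg h j hj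
    rw [Finset.sum_range_succ', Finset.sum_range_succ'] at h
    simp only [pow_zero, mul_one] at h
    have e1 : ∑ j ∈ Finset.range d, f (j+1) * 2 ^ (j+1)
        = 2 * ∑ j ∈ Finset.range d, f (j+1) * 2 ^ j := by
      rw [Finset.mul_sum]; apply Finset.sum_congr rfl; intros; ring
    have e2 : ∑ j ∈ Finset.range d, g (j+1) * 2 ^ (j+1)
        = 2 * ∑ j ∈ Finset.range d, g (j+1) * 2 ^ j := by
      rw [Finset.mul_sum]; apply Finset.sum_congr rfl; intros; ring
    rw [e1, e2] at h
    have hf0 := hf 0; have hg0 := hg 0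
    have h0 : f 0 = g 0 ∧ (∑ j ∈ Finset.range d, f (j+1) * 2 ^ j)
        = ∑ j ∈ Finset.range d, g (j+1) * 2 ^ j := by omega
    rcases Nat.eq_zero_or_pos j with rfl | hjpos
    · exact h0.1
    · obtain ⟨j', rfl⟩ : ∃ j', j = j' + 1 := ⟨j - 1, by omega⟩
      exact ih (fun k => f (k+1)) (fun k => g (k+1)) (fun k => hf _) (fun k => hg _) h0.2 j' (by omega)

lemma bits_bound (d : ℕ) (f : ℕ → ℕ) (hf : ∀ j, f j ≤ 1) :
    ∑ j ∈ Finset.range d, f j * 2 ^ j < 2 ^ d := by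
  induction d with
  | zero => simp
  | succ d ih =>
    rw [Finset.sum_range_succ]
    have := hf d
    have : f d * 2 ^ d ≤ 2 ^ d := by
      calc f d * 2 ^ d ≤ 1 * 2 ^ d := Nat.mul_le_mul_right _ (hf d)
      _ = 2 ^ d := one_mul _
    rw [pow_succ]
    omega


def bitsOf {m : ℕ} (y : Fin m → ZMod 2) : ℕ → ℕ :=
  fun k => if h : k < m then (y ⟨k, h⟩).val else 0

lemma bitsOf_le {m : ℕ} (y : Fin m → ZMod 2) (k : ℕ) : bitsOf y k ≤ 1 := by
  unfold bitsOf
  split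
  · exact Nat.lt_succ_iff.mp (ZMod.val_lt _)
  · exact Nat.zero_le _

def topVal {m : ℕ} (d : ℕ) (y : Fin m → ZMod 2) : ℕ :=
  ∑ k ∈ Finset.range d, bitsOf y k * 2 ^ (d - 1 - k)

def Nval {m : ℕ} (y : Fin m → ZMod 2) : ℕ :=
  ∑ k ∈ Finset.range m, bitsOf y k * 2 ^ (m - 1 - k)

lemma topVal_reflect {m : ℕ} (d : ℕ) (y : Fin m → ZMod 2) :
    topVal d y = ∑ j ∈ Finset.range d, bitsOf y (d - 1 - j) * 2 ^ j := by
  unfold topVal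
  rw [← Finset.sum_range_reflect (fun k => bitsOf y (d - 1 - k) * 2 ^ k) d]
  apply Finset.sum_congr rfl
  intro k hk
  rw [Finset.mem_range] at hk
  congr 2
  omega

lemma topVal_lt {m : ℕ} (d : ℕ) (y : Fin m → ZMod 2) : topVal d y < 2 ^ d := by
  rw [topVal_reflect]
  exact bits_bound d _ (fun j => bitsOf_le y _)

lemma topVal_inj {m : ℕ} (d : ℕ) (y y' : Fin m → ZMod 2)
    (h : topVal d y = topVal d y') : ∀ k < d, bitsOf y k = bitsOf y' k := by
  rw [topVal_reflect, topVal_reflect] at h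
  have := bits_inj d _ _ (fun j => bitsOf_le y _) (fun j => bitsOf_le y' _) h
  intro k hk
  have h2 := this (d - 1 - k) (by omega)
  have : d - 1 - (d - 1 - k) = k := by omega
  rwa [this] at h2

lemma Nval_bounds {m : ℕ} (d : ℕ) (hd : d ≤ m) (y : Fin m → ZMod 2) :
    topVal d y * 2 ^ (m - d) ≤ Nval y ∧ Nval y < (topVal d y + 1) * 2 ^ (m - d) := by
  have hsplit : Nval y = (∑ k ∈ Finset.range d, bitsOf y k * 2 ^ (m - 1 - k))
      + ∑ k ∈ Finset.Ico d m, bitsOf y k * 2 ^ (m - 1 - k) := by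
    unfold Nval
    rw [Finset.range_eq_Ico, ← Finset.sum_Ico_consecutive _ (Nat.zero_le d) hd, ← Finset.range_eq_Ico]
  have hhead : (∑ k ∈ Finset.range d, bitsOf y k * 2 ^ (m - 1 - k))
      = topVal d y * 2 ^ (m - d) := by
    unfold topVal
    rw [Finset.sum_mul]
    apply Finset.sum_congr rfl
    intro k hk
    rw [Finset.mem_range] at hk
    rw [mul_assoc, ← pow_add]
    congr 2
    omega
  have htail : ∑ k ∈ Finset.Ico d m, bitsOf y k * 2 ^ (m - 1 - k) < 2 ^ (m - d) := by
    rw [Finset.sum_Ico_eq_sum_range]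
    have : ∀ k ∈ Finset.range (m - d), bitsOf y (d + k) * 2 ^ (m - 1 - (d + k))
        = bitsOf y (d + k) * 2 ^ ((m - d) - 1 - k) := by
      intro k hk; rw [Finset.mem_range] at hk; congr 2; omega
    rw [Finset.sum_congr rfl this]
    have := bits_bound (m - d) (fun j => bitsOf y (d + ((m-d) - 1 - j)))
      (fun j => bitsOf_le y _)
    rw [← Finset.sum_range_reflect (fun k => bitsOf y (d + k) * 2 ^ ((m-d) - 1 - k)) (m-d)]
    calc ∑ j ∈ Finset.range (m - d),
          bitsOf y (d + ((m-d) - 1 - j)) * 2 ^ ((m-d) - 1 - ((m-d) - 1 - j))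
        = ∑ j ∈ Finset.range (m - d), bitsOf y (d + ((m-d) - 1 - j)) * 2 ^ j := by
          apply Finset.sum_congr rfl
          intro j hj; rw [Finset.mem_range] at hj; congr 2; omega
      _ < 2 ^ (m - d) := bits_bound _ _ (fun j => bitsOf_le y _)
  constructor
  · rw [hsplit, hhead]; omega
  · rw [hsplit, hhead, add_mul, one_mul]; omega

lemma Nval_lt {m : ℕ} (y : Fin m → ZMod 2) : Nval y < 2 ^ m := by
  have h := Nval_bounds m le_rfl y
  have := topVal_lt (m := m) m y
  have h2 : (2:ℕ) ^ (m - m) = 1 := by simp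
  rw [h2] at h
  omega

lemma phiMap_eq {m : ℕ} (y : Fin m → ZMod 2) :
    phiMap m y = (Nval y : ℝ) / 2 ^ m := by
  unfold phiMap Nval
  push_cast
  rw [Finset.sum_div]
  rw [← Fin.sum_univ_eq_sum_range (fun k => (bitsOf y k * 2 ^ (m - 1 - k) : ℝ) / 2 ^ m) m]
  apply Finset.sum_congr rfl
  intro k _
  have hb : bitsOf y k.val = (y k).val := by
    unfold bitsOf; rw [dif_pos k.isLt]
  rw [hb]
  rw [div_eq_div_iff (by positivity) (by positivity)]
  rw [mul_assoc, ← pow_add]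
  congr 2
  omega


lemma interval_iff {m : ℕ} (d a : ℕ) (hd : d ≤ m) (y : Fin m → ZMod 2) :
    ((a : ℝ) / 2 ^ d ≤ phiMap m y ∧ phiMap m y < ((a : ℝ) + 1) / 2 ^ d) ↔
      topVal d y = a := by
  rw [phiMap_eq]
  have h2d : (0:ℝ) < 2 ^ d := by positivity
  have h2m : (0:ℝ) < 2 ^ m := by positivity
  have hpow : (2:ℝ) ^ m = 2 ^ (m - d) * 2 ^ d := by
    rw [← pow_add]; congr 1; omega
  have h1 : ((a : ℝ) / 2 ^ d ≤ (Nval y : ℝ) / 2 ^ m) ↔ a * 2 ^ (m - d) ≤ Nval y := by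
    rw [div_le_div_iff₀ h2d h2m, hpow, ← mul_assoc, mul_le_mul_iff_left₀ h2d]
    exact_mod_cast Iff.rfl
  have h2 : ((Nval y : ℝ) / 2 ^ m < ((a : ℝ) + 1) / 2 ^ d) ↔
      Nval y < (a + 1) * 2 ^ (m - d) := by
    rw [div_lt_div_iff₀ h2m h2d, hpow, ← mul_assoc, mul_lt_mul_iff_left₀ h2d]
    exact_mod_cast Iff.rfl
  rw [h1, h2]
  obtain ⟨hb1, hb2⟩ := Nval_bounds d hd y
  have hE : 0 < 2 ^ (m - d) := pow_pos (by norm_num) _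
  constructor
  · rintro ⟨hl, hr⟩
    have c1 : a * 2 ^ (m - d) < (topVal d y + 1) * 2 ^ (m - d) := lt_of_le_of_lt hl hb2
    have c2 : topVal d y * 2 ^ (m - d) < (a + 1) * 2 ^ (m - d) := lt_of_le_of_lt hb1 hr
    have := Nat.lt_of_mul_lt_mul_right c1
    have := Nat.lt_of_mul_lt_mul_right c2
    omega
  · rintro rfl
    exact ⟨hb1, hb2⟩

lemma digitsVec_injOn (m : ℕ) : ∀ l < 2 ^ m, ∀ l' < 2 ^ m,
    digitsVec m l = digitsVec m l' → l = l' := by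
  intro l hl l' hl' h
  apply Nat.eq_of_testBit_eq
  intro i
  by_cases him : i < m
  · have := congrFun h ⟨i, him⟩
    unfold digitsVec at this
    by_cases hb : l.testBit i <;> by_cases hb' : l'.testBit i <;>
      simp [hb, hb'] at this ⊢ <;> exact absurd this (by decide)
  · have h1 : l.testBit i = false :=
      Nat.testBit_lt_two_pow (lt_of_lt_of_le hl (Nat.pow_le_pow_right (by norm_num) (by omega)))
    have h2 : l'.testBit i = false :=
      Nat.testBit_lt_two_pow (lt_of_lt_of_le hl' (Nat.pow_le_pow_right (by norm_num) (by omega)))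
    rw [h1, h2]

lemma choose_vandermonde (d0 t i : ℕ) :
    ((d0 + t).choose i : ZMod 2) =
      ∑ k ∈ Finset.range (i + 1), (d0.choose k : ZMod 2) * (t.choose (i - k) : ZMod 2) := by
  have h := Nat.add_choose_eq d0 t i
  rw [Finset.Nat.sum_antidiagonal_eq_sum_range_succ_mk] at h
  calc ((d0 + t).choose i : ZMod 2)
      = ((∑ k ∈ Finset.range (i + 1), d0.choose k * t.choose (i - k) : ℕ) : ZMod 2) := by
        rw [← h]
    _ = _ := by push_cast; rfl

lemma key_lemma (m d0 d1 d2 : ℕ) (hsum : d0 + d1 + d2 = m) (z : Fin m → ZMod 2)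
    (h0 : ∀ k : Fin m, k.val < d0 → z k = 0)
    (h1 : ∀ i : Fin m, i.val < d1 →
      (∑ j : Fin m, ((j.val.choose i.val : ℕ) : ZMod 2) * z j) = 0)
    (h2 : ∀ k : Fin m, d0 + d1 ≤ k.val → z k = 0) :
    z = 0 := by
  -- extend z to ℕ
  set zf : ℕ → ZMod 2 := fun j => if h : j < m then z ⟨j, h⟩ else 0 with hzf
  set w : ℕ → ZMod 2 := fun t => zf (d0 + t) with hw
  -- the Pascal conditions in terms of w
  have hP : ∀ i < d1, ∑ t ∈ Finset.range d1, ((d0 + t).choose i : ZMod 2) * w t = 0 := by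
    intro i hi
    have him : i < m := by omega
    have := h1 ⟨i, him⟩ hi
    have hfin : (∑ j : Fin m, ((j.val.choose i : ℕ) : ZMod 2) * z j)
        = ∑ j ∈ Finset.range m, ((j.choose i : ℕ) : ZMod 2) * zf j := by
      rw [← Fin.sum_univ_eq_sum_range (fun j => ((j.choose i : ℕ) : ZMod 2) * zf j) m]
      apply Finset.sum_congr rfl
      intro j _
      congr 1
      simp [hzf, j.isLt]
    have hsub : ∑ j ∈ Finset.range m, ((j.choose i : ℕ) : ZMod 2) * zf j
        = ∑ j ∈ Finset.Ico d0 (d0 + d1), ((j.choose i : ℕ) : ZMod 2) * zf j := by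
      apply (Finset.sum_subset _ _).symm
      · intro j hj
        rw [Finset.mem_Ico] at hj
        rw [Finset.mem_range]
        omega
      · intro j hjm hj
        rw [Finset.mem_range] at hjm
        rw [Finset.mem_Ico] at hj
        have : zf j = 0 := by
          simp only [hzf, dif_pos hjm]
          rcases Nat.lt_or_ge j d0 with hc | hc
          · exact h0 _ hc
          · exact h2 ⟨j, hjm⟩ (show d0 + d1 ≤ j by omega)
        rw [this, mul_zero]
    rw [hfin, hsub, Finset.sum_Ico_eq_sum_range] at this
    simpa using this
  -- u p = ∑ t, C(t,p) w t
  set u : ℕ → ZMod 2 := fun p => ∑ t ∈ Finset.range d1, ((t.choose p : ℕ) : ZMod 2) * w t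
    with hu
  -- rewrite hP via Vandermonde
  have hPu : ∀ i < d1, ∑ k ∈ Finset.range (i + 1), (d0.choose k : ZMod 2) * u (i - k) = 0 := by
    intro i hi
    have := hP i hi
    rw [show (∑ t ∈ Finset.range d1, ((d0 + t).choose i : ZMod 2) * w t)
        = ∑ t ∈ Finset.range d1, ∑ k ∈ Finset.range (i + 1),
          (d0.choose k : ZMod 2) * ((t.choose (i - k) : ZMod 2) * w t) from ?_] at this
    · rw [Finset.sum_comm] at this
      simpa [hu, Finset.mul_sum] using this
    · apply Finset.sum_congr rfl
      intro t _
      rw [choose_vandermonde d0 t i, Finset.sum_mul]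
      apply Finset.sum_congr rfl
      intro k _
      ring
  -- Claim A : u i = 0 for i < d1
  have hA : ∀ i, i < d1 → u i = 0 := by
    intro i
    induction i using Nat.strong_induction_on with
    | _ i ih =>
      intro hi
      have := hPu i hi
      rw [Finset.sum_range_succ'] at this
      have hz : ∀ k ∈ Finset.range i, (d0.choose (k+1) : ZMod 2) * u (i - (k+1)) = 0 := by
        intro k hk
        rw [Finset.mem_range] at hk
        rw [ih (i - (k+1)) (by omega) (by omega), mul_zero]
      rw [Finset.sum_congr rfl hz] at this
      simpa using this
  -- Claim B : w t = 0 for t < d1, by downward induction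
  have hB : ∀ n t, d1 - t ≤ n → t < d1 → w t = 0 := by
    intro n
    induction n with
    | zero => intro t h1t h2t; omega
    | succ n ih =>
      intro t h1t h2t
      have hut : (∑ s ∈ Finset.range d1, ((s.choose t : ℕ) : ZMod 2) * w s) = 0 :=
        hA t h2t
      have : ∑ s ∈ Finset.range d1, ((s.choose t : ℕ) : ZMod 2) * w s = w t := by
        rw [Finset.sum_eq_single_of_mem t (Finset.mem_range.mpr h2t)]
        · simp
        · intro s hs hst
          rw [Finset.mem_range] at hs
          rcases Nat.lt_or_ge s t with hc | hc
          · rw [Nat.choose_eq_zero_of_lt hc]; simp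
          · have hst' : t < s := by omega
            rw [ih s (by omega) hs, mul_zero]
      rw [this] at hut
      exact hut
  -- conclude
  funext j
  rcases Nat.lt_or_ge j.val d0 with hc | hc
  · exact h0 j hc
  rcases Nat.lt_or_ge j.val (d0 + d1) with hc2 | hc2
  · have := hB d1 (j.val - d0) (by omega) (by omega)
    simp only [hw, hzf] at this
    have hj : d0 + (j.val - d0) = j.val := by omega
    rw [hj, dif_pos j.isLt] at this
    simpa using this
  · exact h2 j hc2

end Aux

lemma Jmat_mulVec {m : ℕ} (z : Fin m → ZMod 2) (k : Fin m) :
    (Jmat m).mulVec z k = z ⟨m - 1 - k.val, by have := k.isLt; omega⟩ := by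
  have hk := k.isLt
  rw [Matrix.mulVec, dotProduct]
  rw [Finset.sum_eq_single_of_mem (⟨m - 1 - k.val, by omega⟩ : Fin m) (Finset.mem_univ _)]
  · rw [Jmat]
    simp only [Matrix.of_apply]
    rw [if_pos (show k.val + (m - 1 - k.val) = m - 1 by omega), one_mul]
  · intro j _ hj
    rw [Jmat]
    simp only [Matrix.of_apply]
    rw [if_neg, zero_mul]
    intro hcon
    exact hj (Fin.ext (by simp; omega))

lemma Pmat_mulVec {m : ℕ} (z : Fin m → ZMod 2) (i : Fin m) :
    (Pmat m).mulVec z i = ∑ j : Fin m, ((j.val.choose i.val : ℕ) : ZMod 2) * z j := by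
  rw [Matrix.mulVec, dotProduct]
  apply Finset.sum_congr rfl
  intro j _
  rw [Pmat]
  simp

lemma countP_range_map {β : Type*} (N : ℕ) (f : ℕ → β) (p : β → Prop) [DecidablePred p] :
    Multiset.countP p ((Multiset.range N).map f)
      = ((Finset.range N).filter (fun l => p (f l))).card := by
  rw [Multiset.countP_map]
  rfl

theorem stmt4 (m : ℕ) (hm : 1 ≤ m) :
    IsNet 0 m 3 (digitalNet m 3 ![1, Pmat m, Jmat m]) := by
  classical
  intro d hd a ha
  rw [Nat.sub_zero] at hd
  have hd3 : d 0 + d 1 + d 2 = m := by rw [← hd, Fin.sum_univ_three]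
  have hdle : ∀ i, d i ≤ m := by
    intro i
    calc d i ≤ ∑ j, d j :=
          Finset.single_le_sum (fun j _ => Nat.zero_le _) (Finset.mem_univ i)
      _ = m := hd
  set C : Fin 3 → Matrix (Fin m) (Fin m) (ZMod 2) := ![1, Pmat m, Jmat m] with hC
  have hC0 : C 0 = 1 := rfl
  have hC1 : C 1 = Pmat m := rfl
  have hC2 : C 2 = Jmat m := rfl
  set F : ℕ → (Fin 3 → ℕ) :=
    fun l i => topVal (d i) ((C i).mulVec (digitsVec m l)) with hF
  -- injectivity of F on range (2^m)
  have hinj : ∀ l < 2 ^ m, ∀ l' < 2 ^ m, F l = F l' → l = l' := by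
    intro l hl l' hl' hFeq
    apply digitsVec_injOn m l hl l' hl'
    set y := digitsVec m l with hy
    set y' := digitsVec m l' with hy'
    have hcoord : ∀ i : Fin 3, ∀ k : Fin m, k.val < d i →
        (C i).mulVec y k = (C i).mulVec y' k := by
      intro i k hk
      have h := topVal_inj (d i) ((C i).mulVec y) ((C i).mulVec y') (congrFun hFeq i) k.val hk
      unfold bitsOf at h
      rw [dif_pos k.isLt, dif_pos k.isLt] at h
      have := ZMod.val_injective 2 h
      simpa using this
    have hz : y - y' = 0 := by
      apply key_lemma m (d 0) (d 1) (d 2) hd3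
      · intro k hk
        have := hcoord 0 k hk
        rw [hC0, Matrix.one_mulVec, Matrix.one_mulVec] at this
        simp [Pi.sub_apply, this]
      · intro i hi
        have h := hcoord 1 i hi
        rw [hC1, Pmat_mulVec, Pmat_mulVec] at h
        have : (∑ j : Fin m, ((j.val.choose i.val : ℕ) : ZMod 2) * (y - y') j)
            = (∑ j : Fin m, ((j.val.choose i.val : ℕ) : ZMod 2) * y j)
              - ∑ j : Fin m, ((j.val.choose i.val : ℕ) : ZMod 2) * y' j := by
          rw [← Finset.sum_sub_distrib]
          apply Finset.sum_congr rfl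
          intro j _
          rw [Pi.sub_apply, mul_sub]
        rw [this, h, sub_self]
      · intro k hk
        have hkm := k.isLt
        have hd2pos : 0 < d 2 := by omega
        set k' : Fin m := ⟨m - 1 - k.val, by omega⟩ with hk'
        have hk'lt : k'.val < d 2 := by
          simp only [hk']
          omega
        have h := hcoord 2 k' hk'lt
        rw [hC2, Jmat_mulVec, Jmat_mulVec] at h
        have hidx : (⟨m - 1 - k'.val, by omega⟩ : Fin m) = k := by
          apply Fin.ext
          simp only [hk']
          omega
        rw [hidx] at h
        simp [Pi.sub_apply, h]
    rw [← sub_eq_zero]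
    exact hz
  -- counting
  rw [digitalNet, countP_range_map]
  have hQiff : ∀ l, (∀ i : Fin 3,
      ((a i : ℝ) / 2 ^ d i ≤ phiMap m ((C i).mulVec (digitsVec m l)) ∧
        phiMap m ((C i).mulVec (digitsVec m l)) < ((a i : ℝ) + 1) / 2 ^ d i))
      ↔ F l = a := by
    intro l
    constructor
    · intro h
      funext i
      exact (interval_iff (d i) (a i) (hdle i) _).mp (h i)
    · intro h i
      exact (interval_iff (d i) (a i) (hdle i) _).mpr (congrFun h i)
  set S := Fintype.piFinset (fun i : Fin 3 => Finset.range (2 ^ d i)) with hS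
  have hScard : S.card = 2 ^ m := by
    rw [hS, Fintype.card_piFinset]
    simp only [Finset.card_range]
    rw [Finset.prod_pow_eq_pow_sum, hd]
  have himg : (Finset.range (2 ^ m)).image F = S := by
    apply Finset.eq_of_subset_of_card_le
    · intro x hx
      obtain ⟨l, hl, rfl⟩ := Finset.mem_image.mp hx
      exact Fintype.mem_piFinset.mpr (fun i => Finset.mem_range.mpr (topVal_lt _ _))
    · rw [hScard, Finset.card_image_of_injOn, Finset.card_range]
      intro l hl l' hl' hmeq
      exact hinj l (Finset.mem_range.mp hl) l' (Finset.mem_range.mp hl') hmeq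
  have haS : a ∈ S := Fintype.mem_piFinset.mpr (fun i => Finset.mem_range.mpr (ha i))
  rw [← himg] at haS
  obtain ⟨l₀, hl₀, hFl₀⟩ := Finset.mem_image.mp haS
  rw [pow_zero]
  apply Finset.card_eq_one.mpr
  refine ⟨l₀, ?_⟩
  ext l
  simp only [Finset.mem_filter, Finset.mem_singleton, Finset.mem_range]
  constructor
  · rintro ⟨hlmem, hPl⟩
    refine hinj l hlmem l₀ (Finset.mem_range.mp hl₀) ?_
    rw [hFl₀]
    exact (hQiff l).mp hPl
  · rintro rfl
    exact ⟨Finset.mem_range.mp hl₀, (hQiff _).mpr hFl₀⟩
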